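/- If X is a finite-dimensional Archimedean vector lattice, then every net in X that is uo-convergent to some element of X is eventually order bounded in X. -/

import Mathlib

/-- A net `x : ι → X` (indexed by a preordered set `ι`) *order converges* (`o`-converges)
to `l ∈ X` if there is a net `y : Γ → X` over a nonempty directed set `Γ` which decreases
to `0` (i.e. `y` is antitone and `inf_γ y γ = 0`) such that for every `γ` there is an index
`α₀` with `|x α - l| ≤ y γ` for all `α ≥ α₀`. -/
def OConvergesTo {X : Type u} [Lattice X] [AddCommGroup X]
    {ι : Type v} [Preorder ι] (x : ι → X) (l : X) : Prop :=
  ∃ (Γ : Type u) (_ : Preorder Γ) (_ : Nonempty Γ),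
    IsDirected Γ (· ≤ ·) ∧
    ∃ y : Γ → X, Antitone y ∧ IsGLB (Set.range y) 0 ∧
      ∀ γ : Γ, ∃ α₀ : ι, ∀ α : ι, α₀ ≤ α → |x α - l| ≤ y γ

/-- A net `x : ι → X` is *unbounded order convergent* (`uo`-convergent) to `l ∈ X` if
`|x α - l| ⊓ y` order converges to `0` for every `y ≥ 0`. -/
def UOConvergesTo {X : Type u} [Lattice X] [AddCommGroup X]
    {ι : Type v} [Preorder ι] (x : ι → X) (l : X) : Prop :=
  ∀ y : X, 0 ≤ y → OConvergesTo (fun α => |x α - l| ⊓ y) (0 : X)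

/-- A net `x : ι → X` is *eventually order bounded* if there are `α₀ ∈ ι` and `b ∈ X`
with `|x α| ≤ b` for all `α ≥ α₀`. -/
def EventuallyOrderBounded {X : Type u} [Lattice X] [AddCommGroup X]
    {ι : Type v} [Preorder ι] (x : ι → X) : Prop :=
  ∃ (α₀ : ι) (b : X), ∀ α : ι, α₀ ≤ α → |x α| ≤ b

/-- A vector lattice is *Archimedean* if `n • x ≤ y` for all `n : ℕ` implies `x ≤ 0`. -/
def ArchimedeanVL (X : Type u) [Lattice X] [AddCommGroup X] : Prop :=
  ∀ x y : X, (∀ n : ℕ, n • x ≤ y) → x ≤ 0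

section AuxLattice

variable {X : Type u} [AddCommGroup X] [Lattice X]
  [CovariantClass X X (· + ·) (· ≤ ·)]

/-- Riesz decomposition style inequality: for nonneg elements,
`a ⊓ (b + c) ≤ a ⊓ b + a ⊓ c`. -/
private lemma aux_inf_add_le_inf_add_inf {a b c : X} (ha : 0 ≤ a) (hb : 0 ≤ b) (hc : 0 ≤ c) :
    a ⊓ (b + c) ≤ a ⊓ b + a ⊓ c := by
  set d := a ⊓ (b + c) with hd
  have hda : d ≤ a := inf_le_left
  have hdbc : d ≤ b + c := inf_le_right
  have hkey : d - a ⊓ b ≤ a ⊓ c := by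
    have h1 : d - a ⊓ b = (d - a) ⊔ (d - b) := by
      rw [sub_eq_add_neg, neg_inf, add_sup]
      simp [sub_eq_add_neg]
    rw [h1]
    refine sup_le (le_trans (by simpa using hda) (le_inf ha hc)) ?_
    refine le_inf ?_ (by simpa [sub_le_iff_le_add', add_comm] using hdbc)
    calc d - b ≤ d - 0 := by exact sub_le_sub_left hb d
    _ = d := sub_zero d
    _ ≤ a := hda
  calc a ⊓ (b + c) = (d - a ⊓ b) + a ⊓ b := by rw [sub_add_cancel]
  _ ≤ a ⊓ c + a ⊓ b := add_le_add_left hkey _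
  _ = a ⊓ b + a ⊓ c := add_comm _ _

private lemma aux_inf_nsmul_le_nsmul_inf {w e : X} (hw : 0 ≤ w) (he : 0 ≤ e) :
    ∀ n : ℕ, w ⊓ (n • e) ≤ n • (w ⊓ e)
  | 0 => by simp [inf_eq_right.mpr hw]
  | (n + 1) => by
    have h1 : w ⊓ ((n + 1) • e) = w ⊓ (n • e + e) := by rw [succ_nsmul]
    rw [h1]
    calc w ⊓ (n • e + e) ≤ w ⊓ (n • e) + w ⊓ e :=
          aux_inf_add_le_inf_add_inf hw (nsmul_nonneg he n) he
    _ ≤ n • (w ⊓ e) + w ⊓ e := add_le_add_left (aux_inf_nsmul_le_nsmul_inf hw he n) _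
    _ = (n + 1) • (w ⊓ e) := (succ_nsmul _ n).symm

private lemma aux_eq_zero_of_abs_le_zero {a : X} (h : |a| ≤ 0) : a = 0 := by
  have h1 : a ≤ 0 := (le_abs_self a).trans h
  have h2 : -a ≤ 0 := (neg_le_abs a).trans h
  exact le_antisymm h1 (by rwa [neg_nonpos] at h2)

variable [Module ℝ X] [PosSMulMono ℝ X]

private lemma aux_rsmul_sup {c : ℝ} (hc : 0 ≤ c) (a b : X) : c • (a ⊔ b) = c • a ⊔ c • b := by
  have hle : ∀ {d : ℝ}, 0 ≤ d → ∀ u v : X, d • u ⊔ d • v ≤ d • (u ⊔ v) := fun hd u v =>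
    sup_le (smul_le_smul_of_nonneg_left le_sup_left hd)
      (smul_le_smul_of_nonneg_left le_sup_right hd)
  rcases eq_or_lt_of_le hc with rfl | hc'
  · simp
  · refine le_antisymm ?_ (hle hc a b)
    have h2 : a ⊔ b ≤ c⁻¹ • (c • a ⊔ c • b) := by
      have := hle (inv_nonneg.mpr hc) (c • a) (c • b)
      rwa [inv_smul_smul₀ hc'.ne', inv_smul_smul₀ hc'.ne'] at this
    calc c • (a ⊔ b) ≤ c • (c⁻¹ • (c • a ⊔ c • b)) := smul_le_smul_of_nonneg_left h2 hc
    _ = c • a ⊔ c • b := smul_inv_smul₀ hc'.ne' _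

private lemma aux_abs_rsmul (c : ℝ) (a : X) : |c • a| = |c| • |a| := by
  rcases le_or_gt 0 c with hc | hc
  · rw [abs_of_nonneg hc]
    show (c • a) ⊔ (-(c • a)) = c • (a ⊔ -a)
    rw [aux_rsmul_sup hc, smul_neg]
  · have h1 : |c • a| = |(-c) • a| := by rw [neg_smul, abs_neg]
    rw [h1, abs_of_neg hc]
    show ((-c) • a) ⊔ (-((-c) • a)) = (-c) • (a ⊔ -a)
    rw [aux_rsmul_sup (by linarith), smul_neg]

private lemma aux_smul_le_smul_right {c d : ℝ} {e : X} (h : c ≤ d) (he : 0 ≤ e) :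
    c • e ≤ d • e := by
  have h0 : 0 ≤ (d - c) • e := smul_nonneg (by linarith) he
  calc c • e = c • e + 0 := (add_zero _).symm
  _ ≤ c • e + (d - c) • e := add_le_add_right h0 _
  _ = d • e := by rw [← add_smul]; ring_nf

/-- Key lattice step: if `z ≥ 0`, `0 ≤ u`, `u + u ≤ e`, `z ⊓ e ≤ u`, and `e` dominates
everything, then `z ≤ u`. -/
private lemma aux_le_of_inf_unit_le {e u z : X} (hz : 0 ≤ z) (hu0 : 0 ≤ u) (hue : u + u ≤ e)
    (hinf : z ⊓ e ≤ u) (hbound : ∀ w : X, ∃ c : ℝ, 0 ≤ c ∧ |w| ≤ c • e) : z ≤ u := by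
  letI : DistribLattice X := AddCommGroup.toDistribLattice X
  have he0 : 0 ≤ e := le_trans (add_nonneg hu0 hu0) hue
  have hueu : u ≤ e - u := by rwa [le_sub_iff_add_le]
  have heu0 : 0 ≤ e - u := le_trans hu0 hueu
  set w : X := (z - u) ⊔ 0 with hw
  have hw0 : 0 ≤ w := le_sup_right
  have h1 : (z - u) ⊓ (e - u) ≤ 0 := by
    rw [← inf_sub]
    simpa [sub_nonpos] using hinf
  have h2 : w ⊓ (e - u) = 0 := by
    refine le_antisymm ?_ (le_inf hw0 heu0)
    rw [hw, inf_sup_right]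
    exact sup_le h1 inf_le_left
  have h3 : w ⊓ u = 0 :=
    le_antisymm (le_trans (inf_le_inf_left w hueu) h2.le) (le_inf hw0 hu0)
  have h4 : w ⊓ e = 0 := by
    refine le_antisymm ?_ (le_inf hw0 he0)
    calc w ⊓ e = w ⊓ ((e - u) + u) := by rw [sub_add_cancel]
    _ ≤ w ⊓ (e - u) + w ⊓ u := aux_inf_add_le_inf_add_inf hw0 heu0 hu0
    _ = 0 := by rw [h2, h3, add_zero]
  obtain ⟨c, hc0, hce⟩ := hbound w
  obtain ⟨n, hn⟩ := exists_nat_ge c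
  have hwne : w ≤ n • e := by
    calc w = |w| := (abs_of_nonneg hw0).symm
    _ ≤ c • e := hce
    _ ≤ (n : ℝ) • e := aux_smul_le_smul_right hn he0
    _ = n • e := Nat.cast_smul_eq_nsmul ℝ n e
  have hw00 : w ≤ 0 := by
    calc w = w ⊓ (n • e) := (inf_eq_left.mpr hwne).symm
    _ ≤ n • (w ⊓ e) := aux_inf_nsmul_le_nsmul_inf hw0 he0 n
    _ = 0 := by rw [h4, smul_zero]
  exact sub_nonpos.mp (le_trans le_sup_left hw00)

/-- A finite-dimensional vector lattice has a strong order unit. -/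
private lemma aux_exists_strong_unit (hfd : FiniteDimensional ℝ X) :
    ∃ e : X, 0 ≤ e ∧ ∀ z : X, ∃ c : ℝ, 0 ≤ c ∧ |z| ≤ c • e := by
  classical
  letI : IsOrderedAddMonoid X :=
    { add_le_add_left := fun a b h c => add_le_add_left h c }
  have hspan : Submodule.span ℝ {w : X | 0 ≤ w} = ⊤ := by
    rw [eq_top_iff]
    rintro z -
    have h1 : (z ⊔ 0 : X) ∈ Submodule.span ℝ {w : X | 0 ≤ w} :=
      Submodule.subset_span le_sup_right
    have h2 : ((-z) ⊔ 0 : X) ∈ Submodule.span ℝ {w : X | 0 ≤ w} :=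
      Submodule.subset_span le_sup_right
    have hz : z = (z ⊔ 0) - ((-z) ⊔ 0) := by
      have := posPart_sub_negPart z
      rw [posPart_def, negPart_def] at this
      exact this.symm
    exact hz ▸ sub_mem h1 h2
  obtain ⟨b, hbsub, hbspan, hbli⟩ := exists_linearIndependent ℝ {w : X | 0 ≤ w}
  rw [hspan] at hbspan
  have hfin : b.Finite := hbli.setFinite
  haveI := hfin.fintype
  let B : Module.Basis b ℝ X := Module.Basis.mk hbli (by rw [Subtype.range_coe, hbspan])
  set e : X := ∑ i : b, (i : X) with he
  have hmem : ∀ i : b, (0 : X) ≤ i := fun i => hbsub i.2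
  have he0 : 0 ≤ e := by rw [he]; exact Finset.sum_nonneg fun i _ => hmem i
  have hie : ∀ i : b, (i : X) ≤ e := by
    intro i
    have hsplit : e - (i : X) = ∑ j ∈ Finset.univ.erase i, (j : X) := by
      rw [he, ← Finset.add_sum_erase _ _ (Finset.mem_univ i)]
      abel
    have h0 : 0 ≤ e - (i : X) := by
      rw [hsplit]; exact Finset.sum_nonneg fun j _ => hmem j
    exact sub_nonneg.mp h0
  refine ⟨e, he0, fun z => ?_⟩
  set c : ℝ := ∑ i : b, |B.repr z i| with hc
  have hc0 : 0 ≤ c := Finset.sum_nonneg fun i _ => abs_nonneg _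
  have hrepr : ∀ v : X, v = ∑ i : b, (B.repr v i) • (i : X) := by
    intro v
    have := B.sum_repr v
    simp only [B, Module.Basis.coe_mk] at this
    exact this.symm
  have hkey : ∀ v : X, (∀ i : b, |B.repr v i| ≤ |B.repr z i|) → v ≤ c • e := by
    intro v hv
    calc v = ∑ i : b, (B.repr v i) • (i : X) := hrepr v
    _ ≤ ∑ i : b, |B.repr z i| • (i : X) := by
        refine Finset.sum_le_sum fun i _ => ?_
        exact aux_smul_le_smul_right ((le_abs_self _).trans (hv i)) (hmem i)
    _ ≤ ∑ i : b, |B.repr z i| • e := by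
        refine Finset.sum_le_sum fun i _ => ?_
        exact smul_le_smul_of_nonneg_left (hie i) (abs_nonneg _)
    _ = c • e := by rw [hc, Finset.sum_smul]
  have h1 : z ≤ c • e := hkey z fun i => le_rfl
  have h2 : -z ≤ c • e := by
    refine hkey (-z) fun i => ?_
    rw [map_neg]
    simp
  exact ⟨c, hc0, abs_le'.mpr ⟨h1, h2⟩⟩

variable (e : X)

/-- The set of scalars `c ≥ 0` with `|z| ≤ c • e`. -/
private def eSet (z : X) : Set ℝ := {c : ℝ | 0 ≤ c ∧ |z| ≤ c • e}

private lemma eSet_bddBelow (z : X) : BddBelow (eSet e z) := ⟨0, fun _ hc => hc.1⟩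

variable {e}

private lemma eSet_nonempty (hsu : ∀ z : X, ∃ c : ℝ, 0 ≤ c ∧ |z| ≤ c • e) (z : X) :
    (eSet e z).Nonempty := hsu z

private lemma eSet_sInf_nonneg (hsu : ∀ z : X, ∃ c : ℝ, 0 ≤ c ∧ |z| ≤ c • e) (z : X) :
    0 ≤ sInf (eSet e z) := le_csInf (eSet_nonempty hsu z) fun c hc => hc.1

private lemma aux_abs_le_of_sInf_lt (he0 : 0 ≤ e)
    (hsu : ∀ z : X, ∃ c : ℝ, 0 ≤ c ∧ |z| ≤ c • e)
    {z : X} {c : ℝ} (h : sInf (eSet e z) < c) : |z| ≤ c • e := by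
  obtain ⟨d, hd, hdc⟩ := exists_lt_of_csInf_lt (eSet_nonempty hsu z) h
  exact hd.2.trans (aux_smul_le_smul_right hdc.le he0)

/-- The `e`-norm on `X`. -/
private noncomputable def eNorm (he0 : 0 ≤ e)
    (hsu : ∀ z : X, ∃ c : ℝ, 0 ≤ c ∧ |z| ≤ c • e)
    (hA : ArchimedeanVL X) : AddGroupNorm X where
  toFun z := sInf (eSet e z)
  map_zero' := by
    refine le_antisymm (csInf_le (eSet_bddBelow e 0) ?_) (eSet_sInf_nonneg hsu 0)
    exact ⟨le_rfl, by simp⟩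
  add_le' a b := by
    refine le_of_forall_pos_le_add fun ε hε => ?_
    obtain ⟨ca, hca, hca2⟩ := exists_lt_of_csInf_lt (eSet_nonempty hsu a)
      (lt_add_of_pos_right _ (half_pos hε))
    obtain ⟨cb, hcb, hcb2⟩ := exists_lt_of_csInf_lt (eSet_nonempty hsu b)
      (lt_add_of_pos_right _ (half_pos hε))
    have hmem : ca + cb ∈ eSet e (a + b) := by
      refine ⟨by linarith [hca.1, hcb.1], ?_⟩
      calc |a + b| ≤ |a| + |b| := abs_add_le a b
      _ ≤ ca • e + cb • e := add_le_add hca.2 hcb.2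
      _ = (ca + cb) • e := (add_smul _ _ _).symm
    calc sInf (eSet e (a + b)) ≤ ca + cb := csInf_le (eSet_bddBelow e _) hmem
    _ ≤ sInf (eSet e a) + sInf (eSet e b) + ε := by linarith
  neg' z := by
    have h : eSet e (-z) = eSet e z := by
      unfold eSet
      simp only [abs_neg]
    simp only [h]
  eq_zero_of_map_eq_zero' z hz := by
    change sInf (eSet e z) = 0 at hz
    refine aux_eq_zero_of_abs_le_zero (hA |z| e fun n => ?_)
    rcases Nat.eq_zero_or_pos n with rfl | hn
    · simpa using he0
    · have hne : (n : ℝ) ≠ 0 := Nat.cast_ne_zero.mpr hn.ne'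
      have hpos : (0 : ℝ) < 1 / n := by positivity
      have h2 : |z| ≤ ((1 : ℝ) / n) • e := aux_abs_le_of_sInf_lt he0 hsu (by rw [hz]; exact hpos)
      have h3 : (n : ℝ) • |z| ≤ (n : ℝ) • (((1 : ℝ) / n) • e) :=
        smul_le_smul_of_nonneg_left h2 (by positivity)
      have h4 : (n : ℝ) • (((1 : ℝ) / n) • e) = e := by
        rw [smul_smul, mul_one_div, div_self hne, one_smul]
      calc n • |z| = (n : ℝ) • |z| := (Nat.cast_smul_eq_nsmul ℝ n _).symm
      _ ≤ e := h4 ▸ h3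

end AuxLattice

/-- In a finite-dimensional Archimedean vector lattice, every uo-convergent net is
eventually order bounded. -/
theorem uoConvergent_eventuallyOrderBounded_of_finiteDimensional
    {X : Type u} [AddCommGroup X] [Lattice X]
    [CovariantClass X X (· + ·) (· ≤ ·)] [Module ℝ X] [PosSMulMono ℝ X]
    (hArch : ArchimedeanVL X) (hfd : FiniteDimensional ℝ X) :
    ∀ (ι : Type v) (_ : Preorder ι) (_ : Nonempty ι),
      IsDirected ι (· ≤ ·) →
      ∀ (x : ι → X) (l : X), UOConvergesTo x l → EventuallyOrderBounded x := by
  intro ι _ _ _ x l hx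
  obtain ⟨e, he0, hsu⟩ := aux_exists_strong_unit (X := X) hfd
  obtain ⟨Γ, _, hΓne, hΓdir, g, hganti, hgglb, hg⟩ := hx e he0
  haveI := hΓne
  have hg0 : ∀ γ, (0 : X) ≤ g γ := fun γ => hgglb.1 ⟨γ, rfl⟩
  -- introduce the `e`-norm topology on `X`
  letI : NormedAddCommGroup X := (eNorm he0 hsu hArch).toNormedAddCommGroup
  have hnorm : ∀ z : X, ‖z‖ = sInf (eSet e z) := fun _ => rfl
  letI : NormedSpace ℝ X := by
    refine ⟨fun c z => ?_⟩
    refine le_of_forall_pos_le_add fun ε hε => ?_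
    set δ : ℝ := ε / (|c| + 1) with hδ
    have hδpos : 0 < δ := by positivity
    obtain ⟨d, hd, hdlt⟩ := exists_lt_of_csInf_lt (eSet_nonempty hsu z)
      (lt_add_of_pos_right _ hδpos)
    have hmem : |c| * d ∈ eSet e (c • z) := by
      refine ⟨mul_nonneg (abs_nonneg c) hd.1, ?_⟩
      rw [aux_abs_rsmul]
      calc |c| • |z| ≤ |c| • (d • e) := smul_le_smul_of_nonneg_left hd.2 (abs_nonneg c)
      _ = (|c| * d) • e := smul_smul _ _ _
    have h1 : ‖c • z‖ ≤ |c| * d := csInf_le (eSet_bddBelow e _) hmem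
    have h2 : |c| * d ≤ |c| * (‖z‖ + δ) :=
      mul_le_mul_of_nonneg_left hdlt.le (abs_nonneg c)
    have h4 : (|c| + 1) * δ = ε := by
      rw [hδ]; field_simp
    have h3 : |c| * δ ≤ ε := by nlinarith [abs_nonneg c, hδpos.le]
    have h5 : ‖c‖ = |c| := Real.norm_eq_abs c
    rw [h5]
    nlinarith [abs_nonneg c]
  haveI : ProperSpace X := FiniteDimensional.proper_real X
  -- the positive cone is closed
  have hCcl : IsClosed {z : X | 0 ≤ z} := by
    refine isClosed_of_closure_subset fun z hz => ?_
    have key : ∀ n : ℕ, n • (-z) ≤ e := by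
      intro n
      rcases Nat.eq_zero_or_pos n with rfl | hn
      · simpa using he0
      · have hne : (n : ℝ) ≠ 0 := Nat.cast_ne_zero.mpr hn.ne'
        have hpos : (0 : ℝ) < 1 / n := by positivity
        obtain ⟨w, hw, hwd⟩ := Metric.mem_closure_iff.mp hz (1 / n) hpos
        have h1 : sInf (eSet e (z - w)) < 1 / n := by
          rw [← hnorm, ← dist_eq_norm]; exact hwd
        have h2 : |z - w| ≤ ((1 : ℝ) / n) • e := aux_abs_le_of_sInf_lt he0 hsu h1
        have h3 : -z ≤ ((1 : ℝ) / n) • e := by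
          have hwz : -z ≤ w - z := by simpa using hw
          have : w - z ≤ |z - w| := by
            rw [← abs_neg (z - w), neg_sub]
            exact le_abs_self _
          exact hwz.trans (this.trans h2)
        have h4 : (n : ℝ) • (-z) ≤ (n : ℝ) • (((1 : ℝ) / n) • e) :=
          smul_le_smul_of_nonneg_left h3 (by positivity)
        have h5 : (n : ℝ) • (((1 : ℝ) / n) • e) = e := by
          rw [smul_smul, mul_one_div, div_self hne, one_smul]
        calc n • (-z) = (n : ℝ) • (-z) := (Nat.cast_smul_eq_nsmul ℝ n _).symm
        _ ≤ e := h5 ▸ h4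
    exact neg_nonpos.mp (hArch (-z) e key)
  have hle_closed : ∀ a : X, IsClosed {w : X | w ≤ a} := by
    intro a
    have heq : {w : X | w ≤ a} = (fun w => a - w) ⁻¹' {z | 0 ≤ z} := by
      ext w; simp [sub_nonneg]
    rw [heq]
    exact hCcl.preimage (continuous_const.sub continuous_id)
  obtain ⟨γ₁⟩ := hΓne
  -- the order interval `[0, g γ₁]` is compact
  have hKclosed : IsClosed (Set.Icc (0 : X) (g γ₁)) := by
    have heq : Set.Icc (0 : X) (g γ₁) = {z | 0 ≤ z} ∩ {z | z ≤ g γ₁} := rfl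
    rw [heq]; exact hCcl.inter (hle_closed _)
  have hKcompact : IsCompact (Set.Icc (0 : X) (g γ₁)) := by
    obtain ⟨R, hR0, hRe⟩ := hsu (g γ₁)
    have hsubset : Set.Icc (0 : X) (g γ₁) ⊆ Metric.closedBall 0 R := by
      intro z hz
      rw [Metric.mem_closedBall, dist_zero_right, hnorm]
      refine csInf_le (eSet_bddBelow e z) ⟨hR0, ?_⟩
      rw [abs_of_nonneg hz.1]
      exact hz.2.trans ((le_abs_self _).trans hRe)
    exact (isCompact_closedBall 0 R).of_isClosed_subset hKclosed hsubset
  -- the nested family of tail closures has a common point, which must be `0`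
  set F : Γ → Set X := fun γ => closure (g '' {δ | γ ≤ δ}) ∩ Set.Icc (0 : X) (g γ₁) with hF
  have hFclosed : ∀ γ, IsClosed (F γ) := fun _ => isClosed_closure.inter hKclosed
  have hFcompact : ∀ γ, IsCompact (F γ) :=
    fun γ => hKcompact.of_isClosed_subset (hFclosed γ) Set.inter_subset_right
  have hFnonempty : ∀ γ, (F γ).Nonempty := by
    intro γ
    obtain ⟨δ, hδ1, hδ2⟩ := exists_ge_ge γ γ₁
    exact ⟨g δ, subset_closure ⟨δ, hδ1, rfl⟩, ⟨hg0 δ, hganti hδ2⟩⟩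
  have hFdir : Directed (· ⊇ ·) F := by
    intro γ γ'
    obtain ⟨δ, h1, h2⟩ := exists_ge_ge γ γ'
    refine ⟨δ, ?_, ?_⟩
    · exact Set.inter_subset_inter
        (closure_mono (Set.image_mono fun d hd => le_trans h1 hd)) le_rfl
    · exact Set.inter_subset_inter
        (closure_mono (Set.image_mono fun d hd => le_trans h2 hd)) le_rfl
  obtain ⟨z0, hz0⟩ := IsCompact.nonempty_iInter_of_directed_nonempty_isCompact_isClosed
    F hFdir hFnonempty hFcompact hFclosed
  have hz0glb : ∀ γ, z0 ≤ g γ := by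
    intro γ
    have h1 : z0 ∈ closure (g '' {δ | γ ≤ δ}) := (Set.mem_iInter.mp hz0 γ).1
    have h2 : closure (g '' {δ | γ ≤ δ}) ⊆ {w | w ≤ g γ} :=
      closure_minimal (by rintro w ⟨δ, hδ, rfl⟩; exact hganti hδ) (hle_closed _)
    exact h2 h1
  have hz0le : z0 ≤ 0 := hgglb.2 (by rintro w ⟨γ, rfl⟩; exact hz0glb γ)
  have hz00 : z0 = 0 := le_antisymm hz0le (Set.mem_iInter.mp hz0 γ₁).2.1
  -- find a tail element `g δ ≤ (1/2) • e`
  have h0cl : (0 : X) ∈ closure (g '' {δ | γ₁ ≤ δ}) := hz00 ▸ (Set.mem_iInter.mp hz0 γ₁).1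
  obtain ⟨w, hwmem, hwd⟩ := Metric.mem_closure_iff.mp h0cl (1 / 2) (by norm_num)
  obtain ⟨δ, hδγ, rfl⟩ := hwmem
  have h1 : sInf (eSet e (g δ)) < 1 / 2 := by
    have : dist (0 : X) (g δ) = ‖g δ‖ := by rw [dist_comm, dist_zero_right]
    rw [← hnorm, ← this]; exact hwd
  have hgd : g δ ≤ ((1 : ℝ) / 2) • e := (le_abs_self _).trans (aux_abs_le_of_sInf_lt he0 hsu h1)
  have hsum : g δ + g δ ≤ e := by
    calc g δ + g δ ≤ ((1 : ℝ) / 2) • e + ((1 : ℝ) / 2) • e := add_le_add hgd hgd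
    _ = e := by rw [← add_smul]; norm_num
  obtain ⟨α₀, hα₀⟩ := hg δ
  refine ⟨α₀, e + |l|, fun α hα => ?_⟩
  have hstep : |x α - l| ⊓ e ≤ g δ := by
    have h := hα₀ α hα
    have hpos : 0 ≤ |x α - l| ⊓ e := le_inf (abs_nonneg _) he0
    rwa [sub_zero, abs_of_nonneg hpos] at h
  have hzu : |x α - l| ≤ g δ :=
    aux_le_of_inf_unit_le (abs_nonneg _) (hg0 δ) hsum hstep hsu
  have hgde : g δ ≤ e := by
    calc g δ ≤ ((1 : ℝ) / 2) • e := hgd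
    _ ≤ (1 : ℝ) • e := aux_smul_le_smul_right (by norm_num) he0
    _ = e := one_smul _ _
  calc |x α| = |x α - l + l| := by rw [sub_add_cancel]
  _ ≤ |x α - l| + |l| := abs_add_le _ _
  _ ≤ e + |l| := add_le_add (hzu.trans hgde) le_rfl
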